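/- Let (X,d) be a metric space, let Ω ⊂ X be a uniform domain with constant c_U ∈ (0,1] and X∖Ω ≠ ∅, and let M ≥ 1. Then there exist constants c' ≥ 1 and C' ≥ 1, depending only on M and c_U, such that for every pair of distinct points x, y ∈ Ω there is a chain of balls B_k = B(z_k, r_k), k ∈ ℤ, with z_k ∈ Ω and r_k > 0, satisfying: (i) B(z_k, M·r_k) ⊂ Ω for every k; (ii) r_k ≥ (1/c')·min{d(z_k, x), d(z_k, y)} for every k; (iii) B_k ∩ B_{k+1} ≠ ∅ for every k; (iv) r_k/2 ≤ r_{k+1} ≤ 2r_k for every k; (v) dist(x, B_k) → 0 as k → +∞ and dist(y, B_k) → 0 as k → −∞; (vi) Σ_{k∈ℤ} r_k ≤ C'·d(x,y). -/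

import Mathlib

open Metric Filter

/-- A domain `Ω` is uniform with constant `c_U ∈ (0,1]` if every pair of distinct
points `x, y ∈ Ω` can be joined by an arc-length parametrized (i.e. `1`-Lipschitz)
curve `γ : [0, L] → Ω` with `γ 0 = x`, `γ L = y`, `L ≤ c_U⁻¹ d(x,y)` and
`dist(γ t, X∖Ω) ≥ c_U min{t, L - t}` for all `t ∈ [0, L]`. -/
def IsUniformDomain {X : Type*} [MetricSpace X] (Ω : Set X) (cU : ℝ) : Prop :=
  ∀ x ∈ Ω, ∀ y ∈ Ω, x ≠ y →
    ∃ (γ : ℝ → X) (L : ℝ), 0 ≤ L ∧ γ 0 = x ∧ γ L = y ∧ L ≤ cU⁻¹ * dist x y ∧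
      (∀ t ∈ Set.Icc (0 : ℝ) L, γ t ∈ Ω) ∧
      LipschitzOnWith 1 γ (Set.Icc (0 : ℝ) L) ∧
      ∀ t ∈ Set.Icc (0 : ℝ) L, cU * min t (L - t) ≤ infDist (γ t) Ωᶜ

set_option maxHeartbeats 1000000 in
/-- In a uniform domain `Ω` with constant `c_U`, for every `M ≥ 1`
there exist constants `c' ≥ 1` and `C' ≥ 1`, depending only on `M` and `c_U`, such that
every pair of distinct points `x, y ∈ Ω` can be joined by a chain of balls
`B_k = B(z_k, r_k)`, `k ∈ ℤ`, resembling a cigar: `M B_k ⊆ Ω`,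
`r_k ≥ c'⁻¹ min{d(z_k,x), d(z_k,y)}`, consecutive balls intersect, radii of consecutive
balls are `2`-comparable, the chain converges to `x` as `k → +∞` and to `y` as
`k → −∞`, and `Σ_k r_k ≤ C' d(x,y)`. -/
theorem uniform_domain_chain (M cU : ℝ) (hM : 1 ≤ M) (hcU : cU ∈ Set.Ioc (0 : ℝ) 1) :
    ∃ c' ≥ (1 : ℝ), ∃ C' ≥ (1 : ℝ),
      ∀ (X : Type) [MetricSpace X] (Ω : Set X), IsOpen Ω → IsConnected Ω →
        Ωᶜ.Nonempty → IsUniformDomain Ω cU →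
      ∀ x ∈ Ω, ∀ y ∈ Ω, x ≠ y →
        ∃ (z : ℤ → X) (r : ℤ → ℝ),
          (∀ k, z k ∈ Ω) ∧ (∀ k, 0 < r k) ∧
          (∀ k, ball (z k) (M * r k) ⊆ Ω) ∧
          (∀ k, (1 / c') * min (dist (z k) x) (dist (z k) y) ≤ r k) ∧
          (∀ k, (ball (z k) (r k) ∩ ball (z (k + 1)) (r (k + 1))).Nonempty) ∧
          (∀ k, r k / 2 ≤ r (k + 1) ∧ r (k + 1) ≤ 2 * r k) ∧
          Tendsto (fun k => infDist x (ball (z k) (r k))) atTop (nhds 0) ∧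
          Tendsto (fun k => infDist y (ball (z k) (r k))) atBot (nhds 0) ∧
          Summable r ∧ ∑' k, r k ≤ C' * dist x y := by
  obtain ⟨hcU0, hcU1⟩ := hcU
  have hM0 : (0:ℝ) < M := lt_of_lt_of_le one_pos hM
  refine ⟨2*M/cU, ?_, 2/cU, ?_, ?_⟩
  · rw [ge_iff_le, le_div_iff₀ hcU0]; nlinarith
  · rw [ge_iff_le, le_div_iff₀ hcU0]; nlinarith
  intro X _ Ω hopen hconn hne hU x hx y hy hxy
  obtain ⟨γ, L, hL0, hγ0, hγL, hLle, hγΩ, hγlip, hγdist⟩ := hU x hx y hy hxy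
  have hd : 0 < dist x y := dist_pos.2 hxy
  have hdL : dist x y ≤ L := by
    have h := hγlip.dist_le_mul 0 ⟨le_refl 0, hL0⟩ L ⟨hL0, le_refl L⟩
    rw [hγ0, hγL] at h
    simpa [Real.dist_eq, abs_of_nonneg hL0] using h
  have hLpos : 0 < L := lt_of_lt_of_le hd hdL
  set l : ℝ := 1 - cU/(4*M) with hl_def
  have h4M : (0:ℝ) < 4*M := by linarith
  have hM' : M ≠ 0 := ne_of_gt hM0
  have h1l : 1 - l = cU/(4*M) := by rw [hl_def]; ring
  have hq0 : 0 < cU/(4*M) := div_pos hcU0 h4M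
  have hq4 : cU/(4*M) ≤ 1/4 := by
    rw [div_le_div_iff₀ h4M (by norm_num)]; nlinarith
  have hl0 : 0 < l := by rw [hl_def]; linarith
  have hl34 : 3/4 ≤ l := by rw [hl_def]; linarith
  have hl1 : l < 1 := by rw [hl_def]; linarith
  have hρ : 0 < cU/(2*M) := div_pos hcU0 (by linarith)
  have hρ2 : cU/(2*M) = 2*(1-l) := by rw [h1l]; field_simp; ring
  set s : ℤ → ℝ := fun k => (L/2) * l ^ k.natAbs with hs_def
  set t : ℤ → ℝ := fun k => if 0 ≤ k then s k else L - s k with ht_def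
  have hspos : ∀ k, 0 < s k := fun k => mul_pos (by linarith) (pow_pos hl0 _)
  have hsle : ∀ k, s k ≤ L/2 := by
    intro k
    have h1 : l ^ k.natAbs ≤ 1 := pow_le_one₀ hl0.le hl1.le
    calc s k = (L/2) * l ^ k.natAbs := rfl
      _ ≤ (L/2) * 1 := by nlinarith
      _ = L/2 := mul_one _
  have hteq : ∀ k, 0 ≤ k → t k = s k := by
    intro k hk; simp only [ht_def]; rw [if_pos hk]
  have hteq2 : ∀ k, ¬ 0 ≤ k → t k = L - s k := by
    intro k hk; simp only [ht_def]; rw [if_neg hk]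
  have ht01 : ∀ k, t k ∈ Set.Icc (0:ℝ) L := by
    intro k
    by_cases hk : 0 ≤ k
    · rw [hteq k hk]; exact ⟨(hspos k).le, by linarith [hsle k]⟩
    · rw [hteq2 k hk]; exact ⟨by linarith [hsle k], by linarith [hspos k]⟩
  have htmin : ∀ k, min (t k) (L - t k) = s k := by
    intro k
    by_cases hk : 0 ≤ k
    · rw [hteq k hk, min_eq_left (by linarith [hsle k])]
    · rw [hteq2 k hk]
      have h : L - (L - s k) = s k := by ring
      rw [h, min_eq_right (by linarith [hsle k])]
  have es1 : ∀ n : ℕ, s ((n:ℕ):ℤ) = (L/2) * l ^ n := by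
    intro n; simp [hs_def]
  have es2 : ∀ n : ℕ, s (-((n:ℕ):ℤ)) = (L/2) * l ^ n := by
    intro n; simp [hs_def]
  have e1 : ∀ n : ℕ, t ((n:ℕ):ℤ) = (L/2) * l ^ n := by
    intro n; rw [hteq _ (Int.natCast_nonneg n), es1]
  have e2 : ∀ n : ℕ, t (-((n:ℕ):ℤ)) = L - (L/2) * l ^ n := by
    intro n
    cases n with
    | zero =>
      have h0 : (-((0:ℕ):ℤ)) = 0 := by norm_num
      rw [h0, hteq 0 le_rfl]
      have := es1 0
      norm_num at this ⊢
      rw [this]; ring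
    | succ m =>
      rw [hteq2 _ (by omega), es2]
  have hdx : ∀ k, dist (γ (t k)) x ≤ t k := by
    intro k
    have h := hγlip.dist_le_mul (t k) (ht01 k) 0 ⟨le_refl 0, hL0⟩
    rw [hγ0] at h
    simpa [Real.dist_eq, abs_of_nonneg (ht01 k).1] using h
  have hdy : ∀ k, dist (γ (t k)) y ≤ L - t k := by
    intro k
    have h := hγlip.dist_le_mul (t k) (ht01 k) L ⟨hL0, le_refl L⟩
    rw [hγL] at h
    have hdd : dist (t k) L = L - t k := by
      rw [Real.dist_eq, abs_of_nonpos (by linarith [(ht01 k).2]), neg_sub]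
    rw [hdd] at h
    simpa using h
  have hrpos : ∀ k, 0 < cU/(2*M) * s k := fun k => mul_pos hρ (hspos k)
  have gaplt : ∀ n : ℕ, (L/2)*l^n - (L/2)*l^(n+1) <
      cU/(2*M) * ((L/2)*l^n) + cU/(2*M) * ((L/2)*l^(n+1)) := by
    intro n
    have hA : 0 < (L/2)*l^n := mul_pos (by linarith) (pow_pos hl0 n)
    rw [hρ2, pow_succ]
    nlinarith [mul_pos (mul_pos hA (sub_pos.2 hl1)) (show (0:ℝ) < 1 + 2*l by linarith)]
  have key : ∀ a b ra rb : ℝ, a ∈ Set.Icc (0:ℝ) L → b ∈ Set.Icc (0:ℝ) L → b ≤ a →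
      0 < ra → 0 < rb → a - b < ra + rb →
      (ball (γ a) ra ∩ ball (γ b) rb).Nonempty := by
    intro a b ra rb ha hb hba hra hrb hlt
    have hrr : 0 < ra + rb := by linarith
    set q : ℝ := (a - b) / (ra + rb) with hq_def
    have hq0' : 0 ≤ q := div_nonneg (by linarith) hrr.le
    have hq1 : q < 1 := (div_lt_one hrr).2 hlt
    have hab : a - b = q * (ra + rb) := by
      rw [hq_def, div_mul_cancel₀ _ (ne_of_gt hrr)]
    set u : ℝ := a - q * ra with hu_def
    have hqra : 0 ≤ q * ra := mul_nonneg hq0' hra.le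
    have hqrb : 0 ≤ q * rb := mul_nonneg hq0' hrb.le
    have hub : b ≤ u := by rw [hu_def]; nlinarith
    have hua : u ≤ a := by rw [hu_def]; linarith
    have huI : u ∈ Set.Icc (0:ℝ) L := ⟨le_trans hb.1 hub, le_trans hua ha.2⟩
    refine ⟨γ u, ?_, ?_⟩
    · rw [mem_ball]
      have h := hγlip.dist_le_mul u huI a ha
      have habs : dist u a = q * ra := by
        rw [Real.dist_eq, abs_of_nonpos (by rw [hu_def]; linarith), hu_def]; ring
      rw [habs] at h
      have h2 : q * ra < ra := by nlinarith [mul_pos (sub_pos.2 hq1) hra]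
      calc dist (γ u) (γ a) ≤ 1 * (q * ra) := by simpa using h
        _ = q * ra := one_mul _
        _ < ra := h2
    · rw [mem_ball]
      have h := hγlip.dist_le_mul u huI b hb
      have hub' : u - b = q * rb := by rw [hu_def]; linear_combination hab
      have habs : dist u b = q * rb := by
        rw [Real.dist_eq, abs_of_nonneg (by linarith), hub']
      rw [habs] at h
      have h2 : q * rb < rb := by nlinarith [mul_pos (sub_pos.2 hq1) hrb]
      calc dist (γ u) (γ b) ≤ 1 * (q * rb) := by simpa using h
        _ = q * rb := one_mul _
        _ < rb := h2
  refine ⟨fun k => γ (t k), fun k => cU/(2*M) * s k, fun k => hγΩ _ (ht01 k), hrpos,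
    ?_, ?_, ?_, ?_, ?_, ?_, ?_, ?_⟩
  · -- M-ball inside Ω
    intro k w hw
    by_contra hwΩ
    have h1 : infDist (γ (t k)) Ωᶜ ≤ dist (γ (t k)) w := infDist_le_dist_of_mem hwΩ
    rw [mem_ball] at hw
    have h2 : cU * s k ≤ infDist (γ (t k)) Ωᶜ := by
      rw [← htmin k]; exact hγdist (t k) (ht01 k)
    have h3 : M * (cU/(2*M) * s k) = cU * s k / 2 := by field_simp
    rw [dist_comm] at h1
    rw [h3] at hw
    nlinarith [mul_pos hcU0 (hspos k)]
  · -- lower bound on radii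
    intro k
    have hc : (1:ℝ)/(2*M/cU) = cU/(2*M) := one_div_div _ _
    rw [hc]
    have hmin : min (dist (γ (t k)) x) (dist (γ (t k)) y) ≤ s k := by
      rw [← htmin k]
      exact min_le_min (hdx k) (hdy k)
    exact mul_le_mul_of_nonneg_left hmin hρ.le
  · -- consecutive balls intersect
    intro k
    cases k with
    | ofNat n =>
      have hof : (Int.ofNat n : ℤ) = ((n:ℕ):ℤ) := rfl
      have hof1 : ((n:ℕ):ℤ) + 1 = ((n+1:ℕ):ℤ) := by push_cast; ring
      rw [hof, hof1]
      refine key _ _ _ _ (ht01 _) (ht01 _) ?_ (hrpos _) (hrpos _) ?_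
      · rw [e1, e1]
        have : l^(n+1) ≤ l^n := by
          rw [pow_succ]; nlinarith [pow_pos hl0 n]
        nlinarith
      · beta_reduce
        rw [e1, e1, es1, es1]
        linarith [gaplt n]
    | negSucc n =>
      have hns : (Int.negSucc n : ℤ) = -((n+1:ℕ):ℤ) := by
        rw [Int.negSucc_eq]; push_cast; ring
      have hns1 : -((n+1:ℕ):ℤ) + 1 = -((n:ℕ):ℤ) := by push_cast; ring
      rw [hns, hns1]
      refine key _ _ _ _ (ht01 _) (ht01 _) ?_ (hrpos _) (hrpos _) ?_
      · rw [e2, e2]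
        have : l^(n+1) ≤ l^n := by
          rw [pow_succ]; nlinarith [pow_pos hl0 n]
        nlinarith
      · beta_reduce
        rw [e2, e2, es2, es2]
        have := gaplt n
        ring_nf
        ring_nf at this
        linarith
  · -- comparable radii
    intro k
    cases k with
    | ofNat n =>
      have hof : (Int.ofNat n : ℤ) = ((n:ℕ):ℤ) := rfl
      have hof1 : ((n:ℕ):ℤ) + 1 = ((n+1:ℕ):ℤ) := by push_cast; ring
      beta_reduce
      rw [hof, hof1, es1, es1, pow_succ]
      constructor <;>
        nlinarith [mul_pos hρ (mul_pos (show (0:ℝ) < L/2 by linarith) (pow_pos hl0 n)),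
          hl34, hl1, hρ]
    | negSucc n =>
      have hns : (Int.negSucc n : ℤ) = -((n+1:ℕ):ℤ) := by
        rw [Int.negSucc_eq]; push_cast; ring
      have hns1 : -((n+1:ℕ):ℤ) + 1 = -((n:ℕ):ℤ) := by push_cast; ring
      beta_reduce
      rw [hns, hns1, es2, es2, pow_succ]
      constructor <;>
        nlinarith [mul_pos hρ (mul_pos (show (0:ℝ) < L/2 by linarith) (pow_pos hl0 n)),
          hl34, hl1, hρ]
  · -- tendsto x at atTop
    refine squeeze_zero' (g := fun k : ℤ => s k) ?_ ?_ ?_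
    · filter_upwards with k using infDist_nonneg
    · filter_upwards [eventually_ge_atTop (0:ℤ)] with k hk
      have h1 : infDist x (ball (γ (t k)) (cU/(2*M) * s k)) ≤ dist x (γ (t k)) :=
        infDist_le_dist_of_mem (mem_ball_self (hrpos k))
      have h2 : dist x (γ (t k)) ≤ t k := by rw [dist_comm]; exact hdx k
      exact le_trans h1 (h2.trans (le_of_eq (hteq k hk)))
    · have h0 : Tendsto (fun n : ℕ => (L/2) * l^n) atTop (nhds 0) := by
        simpa using (tendsto_pow_atTop_nhds_zero_of_lt_one hl0.le hl1).const_mul (L/2)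
      have h1 : Tendsto (fun k : ℤ => k.natAbs) atTop atTop := by
        refine tendsto_atTop_atTop.2 fun b => ⟨(b:ℤ), fun k hk => ?_⟩
        omega
      simpa [hs_def, Function.comp_def] using h0.comp h1
  · -- tendsto y at atBot
    refine squeeze_zero' (g := fun k : ℤ => s k) ?_ ?_ ?_
    · filter_upwards with k using infDist_nonneg
    · filter_upwards [eventually_le_atBot (0:ℤ)] with k hk
      have h1 : infDist y (ball (γ (t k)) (cU/(2*M) * s k)) ≤ dist y (γ (t k)) :=
        infDist_le_dist_of_mem (mem_ball_self (hrpos k))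
      have h2 : dist y (γ (t k)) ≤ L - t k := by rw [dist_comm]; exact hdy k
      have h3 : L - t k ≤ s k := by
        rcases eq_or_lt_of_le hk with h | h
        · subst h
          rw [hteq 0 le_rfl]
          have hs0 : s 0 = L/2 := by simpa using es1 0
          rw [hs0]; linarith
        · rw [hteq2 k (by omega)]; linarith
      exact le_trans h1 (le_trans h2 h3)
    · have h0 : Tendsto (fun n : ℕ => (L/2) * l^n) atTop (nhds 0) := by
        simpa using (tendsto_pow_atTop_nhds_zero_of_lt_one hl0.le hl1).const_mul (L/2)
      have h1 : Tendsto (fun k : ℤ => k.natAbs) atBot atTop :=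
        tendsto_atBot_atTop.2 fun b => ⟨-(b:ℤ), fun k hk => by omega⟩
      simpa [hs_def, Function.comp_def] using h0.comp h1
  all_goals {
    have hgeo := hasSum_geometric_of_lt_one hl0.le hl1
    have h1 : HasSum (fun n : ℕ => cU/(2*M) * s ((n:ℕ):ℤ))
        ((cU/(2*M) * (L/2)) * (1-l)⁻¹) := by
      have heq : (fun n : ℕ => cU/(2*M) * s ((n:ℕ):ℤ)) =
          fun n : ℕ => (cU/(2*M) * (L/2)) * l^n := by
        funext n; rw [es1]; ring
      rw [heq]
      exact hgeo.mul_left _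
    have h2 : HasSum (fun n : ℕ => cU/(2*M) * s (-((n:ℕ):ℤ)-1))
        ((cU/(2*M) * (L/2) * l) * (1-l)⁻¹) := by
      have heq : (fun n : ℕ => cU/(2*M) * s (-((n:ℕ):ℤ)-1)) =
          fun n : ℕ => (cU/(2*M) * (L/2) * l) * l^n := by
        funext n
        have hc : -((n:ℕ):ℤ) - 1 = -((n+1:ℕ):ℤ) := by push_cast; ring
        rw [hc, es2, pow_succ]; ring
      rw [heq]
      exact hgeo.mul_left _
    have hsum : HasSum (fun k : ℤ => cU/(2*M) * s k)
        ((cU/(2*M) * (L/2)) * (1-l)⁻¹ + (cU/(2*M) * (L/2) * l) * (1-l)⁻¹) := by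
      refine HasSum.of_nat_of_neg_add_one h1 ?_
      have heq : (fun n : ℕ => cU/(2*M) * s (-((n:ℕ):ℤ)-1)) =
          fun n : ℕ => cU/(2*M) * s (-((n:ℕ)+1:ℤ)) := by
        funext n; congr 1; push_cast; ring
      rw [heq] at h2
      exact h2
    first
    | exact hsum.summable
    | · rw [hsum.tsum_eq]
        have hval : (cU/(2*M) * (L/2)) * (1-l)⁻¹ + (cU/(2*M) * (L/2) * l) * (1-l)⁻¹
            = L * (1+l) := by
          rw [h1l]
          field_simp
          ring
        rw [hval]
        have h2L : L * (1+l) ≤ 2 * L := by nlinarith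
        have h3L : 2 * L ≤ 2/cU * dist x y := by
          have : 2/cU * dist x y = 2 * (cU⁻¹ * dist x y) := by ring
          rw [this]; linarith
        exact le_trans h2L h3L
  }
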